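/- Assume λ₁, …, λₙ are pairwise distinct and all nonzero. For an n-dimensional subspace U ⊆ V the following are equivalent: (i) U is isotropic for both B and B' (i.e. U is a common Lagrangian subspace of the two symplectic forms B and B'); (ii) U ∩ Wᵢ ≠ 0 for every i; (iii) dim(U ∩ Uᵢ) = n − 1 for every i, where Uᵢ = ⊕_{j ≠ i} Wⱼ is the kernel of Bᵢ. (In particular, the common Lagrangian n-spaces of two general 2-forms on ℂ^{2n} form a Segre n-fold P¹ × ⋯ × P¹ in the Grassmannian G(n,2n).) -/

import Mathlib

open Module

/-- A subspace `U` is *isotropic* for the bilinear form `C` if `C` vanishes identically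
on `U × U`. -/
def IsIsotropic {V : Type*} [AddCommGroup V] [Module ℂ V]
    (C : V →ₗ[ℂ] V →ₗ[ℂ] ℂ) (U : Submodule ℂ V) : Prop :=
  ∀ u ∈ U, ∀ v ∈ U, C u v = 0

open Submodule

set_option linter.unusedSectionVars false
set_option linter.unusedVariables false
set_option maxHeartbeats 800000

section Aux2
variable {n : ℕ} {V : Type*} [AddCommGroup V] [Module ℂ V] [FiniteDimensional ℂ V]
  (b : Basis (Fin n × Fin 2) ℂ V)

theorem segre_mem_W (i : Fin n) (x : V) :
    x ∈ span ℂ {b (i,0), b (i,1)} ↔ ∀ p : Fin n × Fin 2, p.1 ≠ i → b.repr x p = 0 := by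
  have hs : ({b (i,0), b (i,1)} : Set V) = b '' {(i,0), (i,1)} := by
    rw [Set.image_insert_eq, Set.image_singleton]
  rw [hs, b.mem_span_image]
  constructor
  · intro h p hp
    by_contra hne
    have := h (Finset.mem_coe.2 (Finsupp.mem_support_iff.2 hne))
    rcases this with h' | h' <;> rw [h'] at hp <;> exact hp rfl
  · intro h p hp
    have hne : b.repr x p ≠ 0 := Finsupp.mem_support_iff.1 (Finset.mem_coe.1 hp)
    have hp1 : p.1 = i := by by_contra hc; exact hne (h p hc)
    obtain ⟨p1, p2⟩ := p
    subst hp1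
    fin_cases p2 <;> simp [Set.mem_insert_iff]

theorem segre_U_eq_span (i : Fin n) :
    (⨆ j ∈ ({i}ᶜ : Set (Fin n)), span ℂ {b (j,0), b (j,1)}) =
      span ℂ (b '' {p : Fin n × Fin 2 | p.1 ≠ i}) := by
  have hs : ∀ j : Fin n, ({b (j,0), b (j,1)} : Set V) = b '' {(j,0), (j,1)} := fun j => by
    rw [Set.image_insert_eq, Set.image_singleton]
  calc (⨆ j ∈ ({i}ᶜ : Set (Fin n)), span ℂ {b (j,0), b (j,1)})
      = ⨆ j ∈ ({i}ᶜ : Set (Fin n)), span ℂ (b '' {(j,0), (j,1)}) := by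
        simp_rw [hs]
    _ = span ℂ (⋃ j ∈ ({i}ᶜ : Set (Fin n)), b '' {(j,0), (j,1)}) := by
        rw [span_iUnion₂]
    _ = span ℂ (b '' {p : Fin n × Fin 2 | p.1 ≠ i}) := by
        congr 1
        ext v
        simp only [Set.mem_iUnion, Set.mem_image, Set.mem_compl_iff, Set.mem_singleton_iff,
          Set.mem_setOf_eq, Set.mem_insert_iff]
        constructor
        · rintro ⟨j, hj, p, hp, rfl⟩
          exact ⟨p, by rcases hp with rfl | rfl <;> simpa, rfl⟩
        · rintro ⟨⟨p1, p2⟩, hp, rfl⟩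
          exact ⟨p1, hp, (p1, p2), by fin_cases p2 <;> simp, rfl⟩

theorem segre_mem_U (i : Fin n) (x : V) :
    x ∈ (⨆ j ∈ ({i}ᶜ : Set (Fin n)), span ℂ {b (j,0), b (j,1)}) ↔
      ∀ p2 : Fin 2, b.repr x (i, p2) = 0 := by
  rw [segre_U_eq_span, b.mem_span_image]
  constructor
  · intro h p2
    by_contra hne
    have := h (Finset.mem_coe.2 (Finsupp.mem_support_iff.2 hne))
    exact this rfl
  · intro h p hp
    have hne : b.repr x p ≠ 0 := Finsupp.mem_support_iff.1 (Finset.mem_coe.1 hp)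
    intro hc
    obtain ⟨p1, p2⟩ := p
    simp only at hc
    subst hc
    exact hne (h p2)

end Aux2


open Module Submodule


section Aux3
variable {n : ℕ} {V : Type*} [AddCommGroup V] [Module ℂ V] [FiniteDimensional ℂ V]
  (b : Basis (Fin n × Fin 2) ℂ V)

/-- A family of nonzero vectors, one in each block, is linearly independent. -/
theorem segre_li {x : Fin n → V}
    (hxW : ∀ i, x i ∈ span ℂ {b (i,0), b (i,1)}) (hx0 : ∀ i, x i ≠ 0) :
    LinearIndependent ℂ x := by
  rw [linearIndependent_iff']
  intro s g hsum i hi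
  -- pick a nonzero block-i coordinate of x i
  have hxine : b.repr (x i) ≠ 0 := fun h => hx0 i (by
    have : b.repr (x i) = b.repr 0 := by rw [h, map_zero]
    exact b.repr.injective this)
  obtain ⟨p, hp⟩ : ∃ p, b.repr (x i) p ≠ 0 := by
    by_contra hc
    push_neg at hc
    exact hxine (Finsupp.ext hc)
  have hp1 : p.1 = i := by
    by_contra hc
    exact hp ((segre_mem_W b i (x i)).1 (hxW i) p hc)
  have := congrArg (fun v => b.repr v p) hsum
  simp only [map_sum, map_smul, Finsupp.coe_smul, Finsupp.coe_finset_sum, Finset.sum_apply,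
    Pi.smul_apply, smul_eq_mul, map_zero, Finsupp.coe_zero, Pi.zero_apply] at this
  rw [Finset.sum_eq_single_of_mem i hi] at this
  · exact (mul_eq_zero.1 this).resolve_right hp
  · intro j hj hji
    have : b.repr (x j) p = 0 := (segre_mem_W b j (x j)).1 (hxW j) p (by rw [hp1]; exact fun hc => hji hc.symm)
    rw [this, mul_zero]

theorem segre_span_eq {x : Fin n → V} {U : Submodule ℂ V}
    (hU : finrank ℂ U = n)
    (hxU : ∀ i, x i ∈ U)
    (hxW : ∀ i, x i ∈ span ℂ {b (i,0), b (i,1)}) (hx0 : ∀ i, x i ≠ 0) :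
    span ℂ (Set.range x) = U := by
  apply Submodule.eq_of_le_of_finrank_le
  · rw [span_le]; rintro v ⟨i, rfl⟩; exact hxU i
  · rw [hU, finrank_span_eq_card (segre_li b hxW hx0), Fintype.card_fin]

theorem isotropic_of_span {C : V →ₗ[ℂ] V →ₗ[ℂ] ℂ} {s : Set V}
    (h : ∀ x ∈ s, ∀ y ∈ s, C x y = 0) : IsIsotropic C (span ℂ s) := by
  intro u hu v hv
  have h1 : ∀ x ∈ s, span ℂ s ≤ LinearMap.ker (C x) := fun x hx =>
    span_le.2 fun y hy => h x hx y hy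
  have h2 : span ℂ s ≤ LinearMap.ker (C.flip v) := span_le.2 fun x hx => h1 x hx hv
  exact h2 hu

end Aux3

section AuxF
variable {n : ℕ} {V : Type*} [AddCommGroup V] [Module ℂ V] [FiniteDimensional ℂ V]
  (b : Basis (Fin n × Fin 2) ℂ V)
  {B : Fin n → (V →ₗ[ℂ] V →ₗ[ℂ] ℂ)}

theorem segre_formula
    (hB : ∀ i, ∀ p q : Fin n × Fin 2,
      B i (b p) (b q) =
        if p = (i, 0) ∧ q = (i, 1) then 1
        else if p = (i, 1) ∧ q = (i, 0) then -1 else 0)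
    (i : Fin n) (x y : V) :
    B i x y = b.repr x (i,0) * b.repr y (i,1) - b.repr x (i,1) * b.repr y (i,0) := by
  have key : B i = (LinearMap.mul ℂ ℂ).compl₁₂ (b.coord (i,0)) (b.coord (i,1))
      - (LinearMap.mul ℂ ℂ).compl₁₂ (b.coord (i,1)) (b.coord (i,0)) := by
    apply LinearMap.ext_basis b b
    intro p q
    rw [hB i p q]
    simp only [LinearMap.sub_apply, LinearMap.compl₁₂_apply, LinearMap.mul_apply',
      Basis.coord_apply, Basis.repr_self, Finsupp.single_apply]
    obtain ⟨p1, p2⟩ := p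
    obtain ⟨q1, q2⟩ := q
    fin_cases p2 <;> fin_cases q2 <;>
      by_cases hp : p1 = i <;> by_cases hq : q1 = i <;>
        simp [hp, hq, Prod.ext_iff]
  rw [key]
  simp [LinearMap.mul_apply', mul_comm]

end AuxF

section Aux4
open Polynomial
variable {n : ℕ} {V : Type*} [AddCommGroup V] [Module ℂ V] [FiniteDimensional ℂ V]
  (b : Basis (Fin n × Fin 2) ℂ V)
  {B : Fin n → (V →ₗ[ℂ] V →ₗ[ℂ] ℂ)}

theorem segre_finrank_iSup_le {ι : Type*} [Fintype ι] (L : ι → Submodule ℂ V) :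
    finrank ℂ (⨆ i, L i : Submodule ℂ V) ≤ ∑ i, finrank ℂ (L i) := by
  have key : ∀ s : Finset ι, finrank ℂ (⨆ i ∈ s, L i : Submodule ℂ V) ≤
      ∑ i ∈ s, finrank ℂ (L i) := by
    classical
    intro s
    induction s using Finset.induction_on with
    | empty => simp
    | insert _ _ hnotmem ih =>
      rename_i a s
      rw [Finset.iSup_insert, Finset.sum_insert hnotmem]
      have h2 := Submodule.finrank_sup_add_finrank_inf_eq (L a) (⨆ i ∈ s, L i)
      have h3 : finrank ℂ (L a ⊔ ⨆ i ∈ s, L i : Submodule ℂ V) ≤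
          finrank ℂ (L a) + finrank ℂ (⨆ i ∈ s, L i : Submodule ℂ V) := by omega
      exact h3.trans (by omega)
  have : (⨆ i, L i) = ⨆ i ∈ (Finset.univ : Finset ι), L i := by simp
  rw [this]
  simpa using key Finset.univ

theorem segre_i_to_ii
    (hn : 1 ≤ n)
    (hB : ∀ i, ∀ p q : Fin n × Fin 2,
      B i (b p) (b q) =
        if p = (i, 0) ∧ q = (i, 1) then 1
        else if p = (i, 1) ∧ q = (i, 0) then -1 else 0)
    (lam : Fin n → ℂ) (hlam : Function.Injective lam)
    (U : Submodule ℂ V) (hU : finrank ℂ U = n)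
    (h1 : IsIsotropic (∑ i, B i) U) (h2 : IsIsotropic (∑ i, lam i • B i) U)
    (i : Fin n) : U ⊓ span ℂ {b (i,0), b (i,1)} ≠ ⊥ := by
  set Bs : V →ₗ[ℂ] V →ₗ[ℂ] ℂ := ∑ i, B i with hBsdef
  have hBs : ∀ x y : V, Bs x y =
      ∑ j, (b.repr x (j,0) * b.repr y (j,1) - b.repr x (j,1) * b.repr y (j,0)) := by
    intro x y
    simp only [hBsdef, LinearMap.sum_apply]
    exact Finset.sum_congr rfl fun j _ => segre_formula b hB j x y
  have single_eval : ∀ (q p : Fin n × Fin 2), b.repr (b q) p = if q = p then 1 else 0 := by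
    intro q p; simp [Basis.repr_self, Finsupp.single_apply]
  have hskew : ∀ x y : V, Bs y x = - Bs x y := by
    intro x y
    rw [hBs, hBs, ← Finset.sum_neg_distrib]
    exact Finset.sum_congr rfl fun j _ => by ring
  have hRefl : Bs.IsRefl := fun x y h => by rw [hskew x y, h, neg_zero]
  have hnd : LinearMap.BilinForm.Nondegenerate Bs := by
    refine hRefl.nondegenerate_iff_separatingLeft.2 ?_
    intro x hx
    have hcoord : ∀ p : Fin n × Fin 2, b.repr x p = 0 := by
      rintro ⟨j, p2⟩
      fin_cases p2
      · have e1 := hx (b (j,1))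
        rw [hBs] at e1
        rw [Finset.sum_eq_single j] at e1
        · simpa [single_eval] using e1
        · intro k _ hkj
          simp [single_eval, Prod.ext_iff, hkj.symm]
        · simp
      · have e1 := hx (b (j,0))
        rw [hBs] at e1
        rw [Finset.sum_eq_single j] at e1
        · have : -(b.repr x (j,1)) = 0 := by simpa [single_eval] using e1
          simpa using this
        · intro k _ hkj
          simp [single_eval, Prod.ext_iff, hkj.symm]
        · simp
    have hr : b.repr x = b.repr 0 := by rw [map_zero]; exact Finsupp.ext hcoord
    exact b.repr.injective hr
  have hVdim : finrank ℂ V = n * 2 := by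
    rw [finrank_eq_card_basis b, Fintype.card_prod, Fintype.card_fin, Fintype.card_fin]
  have hUeq : U = LinearMap.BilinForm.orthogonal Bs U := by
    refine Submodule.eq_of_le_of_finrank_le ?_ ?_
    · intro x hx
      rw [LinearMap.BilinForm.mem_orthogonal_iff]
      intro u hu
      exact h1 u hu x hx
    · rw [LinearMap.BilinForm.finrank_orthogonal hnd, hVdim, hU]; omega
  -- the endomorphism T
  set T : V →ₗ[ℂ] V := Basis.constr b ℂ (fun p => lam p.1 • b p) with hTdef
  have hTb : ∀ p : Fin n × Fin 2, T (b p) = lam p.1 • b p := fun p => b.constr_basis ℂ _ p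
  have hT : (∑ i, lam i • B i) = Bs ∘ₗ T := by
    apply LinearMap.ext_basis b b
    intro p q
    simp only [LinearMap.sum_apply, LinearMap.smul_apply, LinearMap.coe_comp,
      Function.comp_apply, hTb, map_smul, hBsdef, smul_eq_mul]
    rw [Finset.mul_sum]
    apply Finset.sum_congr rfl
    intro k _
    by_cases hk : k = p.1
    · subst hk; ring
    · have hz : B k (b p) (b q) = 0 := by
        rw [hB]
        split_ifs with h h'
        · exact absurd (congrArg Prod.fst h.1).symm hk
        · exact absurd (congrArg Prod.fst h'.1).symm hk
        · rfl
      rw [hz, mul_zero, mul_zero]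

  have hT' : ∀ x y : V, (∑ i, lam i • B i) x y = Bs (T x) y := by
    intro x y; rw [hT]; rfl
  have hTU : ∀ u ∈ U, T u ∈ U := by
    intro u hu
    have hmem : T u ∈ LinearMap.BilinForm.orthogonal Bs U := by
      rw [LinearMap.BilinForm.mem_orthogonal_iff]
      intro w hw
      have hz : Bs (T u) w = 0 := by rw [← hT' u w]; exact h2 u hu w hw
      exact hRefl _ _ hz
    rw [hUeq]; exact hmem
  have hpow : ∀ k : ℕ, ∀ u ∈ U, (T ^ k) u ∈ U := by
    intro k
    induction k with
    | zero => intro u hu; simpa using hu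
    | succ k ih =>
      intro u hu
      rw [pow_succ, Module.End.mul_apply]
      exact ih _ (hTU u hu)
  have haeval : ∀ q : Polynomial ℂ, ∀ u ∈ U, Polynomial.aeval T q u ∈ U := by
    intro q
    induction q using Polynomial.induction_on' with
    | add p q hp hq =>
      intro u hu
      rw [map_add, LinearMap.add_apply]
      exact U.add_mem (hp u hu) (hq u hu)
    | monomial k a =>
      intro u hu
      rw [Polynomial.aeval_monomial, Module.End.mul_apply, Module.algebraMap_end_apply]
      exact U.smul_mem a (hpow k u hu)
  have heig : ∀ p : Fin n × Fin 2, Module.End.HasEigenvector T (lam p.1) (b p) := by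
    intro p
    exact ⟨Module.End.mem_eigenspace_iff.2 (hTb p), b.ne_zero p⟩
  classical
  set qP : Fin n → Polynomial ℂ := fun k =>
    Polynomial.C ((∏ j ∈ Finset.univ.erase k, (lam k - lam j))⁻¹) *
      ∏ j ∈ Finset.univ.erase k, (Polynomial.X - Polynomial.C (lam j)) with hqPdef
  have heval : ∀ k m : Fin n, Polynomial.eval (lam m) (qP k) = if m = k then 1 else 0 := by
    intro k m
    rw [hqPdef]
    simp only [Polynomial.eval_mul, Polynomial.eval_C, Polynomial.eval_prod,
      Polynomial.eval_sub, Polynomial.eval_X]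
    by_cases hm : m = k
    · subst hm
      rw [if_pos rfl]
      have hne : (∏ j ∈ Finset.univ.erase m, (lam m - lam j)) ≠ 0 :=
        Finset.prod_ne_zero_iff.2 fun j hj =>
          sub_ne_zero.2 fun hc => (Finset.mem_erase.1 hj).1 (hlam hc).symm
      exact inv_mul_cancel₀ hne
    · rw [if_neg hm]
      refine mul_eq_zero_of_right _ ?_
      exact Finset.prod_eq_zero (Finset.mem_erase.2 ⟨hm, Finset.mem_univ m⟩) (sub_self (lam m))
  have hproj : ∀ k : Fin n, ∀ u : V, Polynomial.aeval T (qP k) u =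
      ∑ p : Fin n × Fin 2, (if p.1 = k then b.repr u p else 0) • b p := by
    intro k u
    conv_lhs => rw [← b.sum_repr u]
    rw [map_sum]
    apply Finset.sum_congr rfl
    intro p _
    rw [map_smul, Module.End.aeval_apply_of_hasEigenvector (heig p), heval k p.1]
    by_cases hp : p.1 = k <;> simp [hp]
  have hprojW : ∀ k : Fin n, ∀ u : V,
      (∑ p : Fin n × Fin 2, (if p.1 = k then b.repr u p else 0) • b p) ∈
        span ℂ ({b (k,0), b (k,1)} : Set V) := by
    intro k u
    apply Submodule.sum_mem
    rintro ⟨p1, p2⟩ -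
    by_cases hp : p1 = k
    · subst hp
      rw [if_pos rfl]
      refine Submodule.smul_mem _ _ (Submodule.subset_span ?_)
      fin_cases p2
      · exact Set.mem_insert _ _
      · exact Set.mem_insert_of_mem _ rfl
    · rw [if_neg hp, zero_smul]
      exact Submodule.zero_mem _
  have hdecomp : ∀ u : V, (∑ k : Fin n, ∑ p : Fin n × Fin 2,
      (if p.1 = k then b.repr u p else 0) • b p) = u := by
    intro u
    rw [Finset.sum_comm]
    conv_rhs => rw [← b.sum_repr u]
    apply Finset.sum_congr rfl
    intro p _
    rw [← Finset.sum_smul, Finset.sum_ite_eq]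
    simp
  set L : Fin n → Submodule ℂ V := fun k => U ⊓ span ℂ {b (k,0), b (k,1)} with hLdef
  have hUle : U ≤ ⨆ k, L k := by
    intro u hu
    rw [← hdecomp u]
    apply Submodule.sum_mem
    intro k _
    have hk1 : (∑ p : Fin n × Fin 2, (if p.1 = k then b.repr u p else 0) • b p) ∈ L k := by
      refine Submodule.mem_inf.2 ⟨?_, hprojW k u⟩
      rw [← hproj k u]; exact haeval (qP k) u hu
    exact (le_iSup L k) hk1
  have hW2 : ∀ k : Fin n, finrank ℂ (span ℂ ({b (k,0), b (k,1)} : Set V)) ≤ 2 := by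
    intro k
    refine (finrank_span_le_card _).trans ?_
    rw [Set.toFinset_insert, Set.toFinset_singleton]
    exact (Finset.card_insert_le _ _).trans (by simp)
  have hBval : ∀ k : Fin n, Bs (b (k,0)) (b (k,1)) = 1 := by
    intro k
    rw [hBs, Finset.sum_eq_single k]
    · simp [single_eval]
    · intro j _ hjk; simp [single_eval, Prod.ext_iff, hjk.symm]
    · simp
  have hLle1 : ∀ k, finrank ℂ (L k) ≤ 1 := by
    intro k
    by_contra hc
    push_neg at hc
    have heq : L k = span ℂ ({b (k,0), b (k,1)} : Set V) :=
      Submodule.eq_of_le_of_finrank_le inf_le_right ((hW2 k).trans (by omega))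
    have h0 : b (k,0) ∈ U := by
      have hm : b (k,0) ∈ L k := heq ▸ Submodule.subset_span (Set.mem_insert _ _)
      exact (Submodule.mem_inf.1 hm).1
    have h1' : b (k,1) ∈ U := by
      have hm : b (k,1) ∈ L k := heq ▸ Submodule.subset_span (Set.mem_insert_of_mem _ rfl)
      exact (Submodule.mem_inf.1 hm).1
    have hz := h1 _ h0 _ h1'
    rw [hBval k] at hz
    exact one_ne_zero hz
  have hcount : (n : ℕ) ≤ ∑ k : Fin n, finrank ℂ (L k) :=
    calc n = finrank ℂ U := hU.symm
    _ ≤ finrank ℂ (⨆ k, L k : Submodule ℂ V) := Submodule.finrank_mono hUle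
    _ ≤ ∑ k, finrank ℂ (L k) := segre_finrank_iSup_le L
  intro hbot
  have hLi : finrank ℂ (L i) = 0 := by
    have : L i = ⊥ := hbot
    rw [this]
    exact finrank_bot ℂ V
  have hsum2 : ∑ k : Fin n, finrank ℂ (L k) =
      ∑ k ∈ Finset.univ.erase i, finrank ℂ (L k) + finrank ℂ (L i) :=
    (Finset.sum_erase_add _ _ (Finset.mem_univ i)).symm
  have hbound : ∑ k ∈ Finset.univ.erase i, finrank ℂ (L k) ≤ (Finset.univ.erase i).card := by
    have := Finset.sum_le_card_nsmul (Finset.univ.erase i) (fun k => finrank ℂ (L k)) 1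
      (fun k _ => hLle1 k)
    simpa using this
  have hcard : (Finset.univ.erase i).card = n - 1 := by
    rw [Finset.card_erase_of_mem (Finset.mem_univ i), Finset.card_univ, Fintype.card_fin]
  omega
end Aux4


section Aux5
variable {n : ℕ} {V : Type*} [AddCommGroup V] [Module ℂ V] [FiniteDimensional ℂ V]
  (b : Basis (Fin n × Fin 2) ℂ V)
  {B : Fin n → (V →ₗ[ℂ] V →ₗ[ℂ] ℂ)}

theorem segre_ii_to_i
    (hB : ∀ i, ∀ p q : Fin n × Fin 2,
      B i (b p) (b q) =
        if p = (i, 0) ∧ q = (i, 1) then 1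
        else if p = (i, 1) ∧ q = (i, 0) then -1 else 0)
    (lam : Fin n → ℂ)
    (U : Submodule ℂ V) (hU : finrank ℂ U = n)
    (hii : ∀ i, U ⊓ span ℂ {b (i,0), b (i,1)} ≠ ⊥) :
    IsIsotropic (∑ i, B i) U ∧ IsIsotropic (∑ i, lam i • B i) U := by
  have hex : ∀ i, ∃ x ∈ U ⊓ span ℂ ({b (i,0), b (i,1)} : Set V), x ≠ 0 := fun i =>
    Submodule.ne_bot_iff _ |>.1 (hii i)
  choose x hxmem hx0 using hex
  have hxU : ∀ i, x i ∈ U := fun i => (Submodule.mem_inf.1 (hxmem i)).1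
  have hxW : ∀ i, x i ∈ span ℂ ({b (i,0), b (i,1)} : Set V) := fun i =>
    (Submodule.mem_inf.1 (hxmem i)).2
  have hspan := segre_span_eq b hU hxU hxW hx0
  have key : ∀ (k i j : Fin n), B k (x i) (x j) = 0 := by
    intro k i j
    rw [segre_formula b hB k]
    by_cases hik : i = k
    · by_cases hjk : j = k
      · subst hik; subst hjk; ring
      · have e1 := (segre_mem_W b j (x j)).1 (hxW j) (k,1) (fun h => hjk h.symm)
        have e2 := (segre_mem_W b j (x j)).1 (hxW j) (k,0) (fun h => hjk h.symm)
        rw [e1, e2]; ring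
    · have e1 := (segre_mem_W b i (x i)).1 (hxW i) (k,1) (fun h => hik h.symm)
      have e2 := (segre_mem_W b i (x i)).1 (hxW i) (k,0) (fun h => hik h.symm)
      rw [e1, e2]; ring
  constructor
  · rw [← hspan]
    apply isotropic_of_span
    rintro _ ⟨i, rfl⟩ _ ⟨j, rfl⟩
    simp [LinearMap.sum_apply, key]
  · rw [← hspan]
    apply isotropic_of_span
    rintro _ ⟨i, rfl⟩ _ ⟨j, rfl⟩
    simp [LinearMap.sum_apply, LinearMap.smul_apply, key]

theorem segre_ii_to_iii
    (hn : 1 ≤ n)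
    (U : Submodule ℂ V) (hU : finrank ℂ U = n)
    (hii : ∀ i, U ⊓ span ℂ {b (i,0), b (i,1)} ≠ ⊥) (i : Fin n) :
    finrank ℂ (U ⊓ ⨆ j ∈ ({i}ᶜ : Set (Fin n)), span ℂ {b (j,0), b (j,1)} : Submodule ℂ V) =
      n - 1 := by
  classical
  have hex : ∀ k, ∃ x ∈ U ⊓ span ℂ ({b (k,0), b (k,1)} : Set V), x ≠ 0 := fun k =>
    Submodule.ne_bot_iff _ |>.1 (hii k)
  choose x hxmem hx0 using hex
  have hxU : ∀ k, x k ∈ U := fun k => (Submodule.mem_inf.1 (hxmem k)).1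
  have hxW : ∀ k, x k ∈ span ℂ ({b (k,0), b (k,1)} : Set V) := fun k =>
    (Submodule.mem_inf.1 (hxmem k)).2
  set Ui : Submodule ℂ V := ⨆ j ∈ ({i}ᶜ : Set (Fin n)), span ℂ {b (j,0), b (j,1)} with hUidef
  -- upper bound
  have hxnotin : x i ∉ Ui := by
    intro hmem
    have hblock := (segre_mem_U b i (x i)).1 hmem
    have hother := (segre_mem_W b i (x i)).1 (hxW i)
    apply hx0 i
    have hr : b.repr (x i) = b.repr 0 := by
      rw [map_zero]
      refine Finsupp.ext ?_
      rintro ⟨p1, p2⟩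
      by_cases hp : p1 = i
      · subst hp; exact hblock p2
      · exact hother (p1, p2) hp
    exact b.repr.injective hr
  have hlt : (U ⊓ Ui) < U := by
    refine lt_of_le_of_ne inf_le_left ?_
    intro h
    have : x i ∈ U ⊓ Ui := h.symm ▸ hxU i
    exact hxnotin (Submodule.mem_inf.1 this).2
  have hup : finrank ℂ (U ⊓ Ui : Submodule ℂ V) < n := hU ▸ Submodule.finrank_lt_finrank_of_lt hlt
  -- lower bound
  have hli : LinearIndependent ℂ (fun j : {j : Fin n // j ≠ i} => x j.val) :=
    (segre_li b hxW hx0).comp Subtype.val Subtype.val_injective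
  have hsple : span ℂ (Set.range (fun j : {j : Fin n // j ≠ i} => x j.val)) ≤ U ⊓ Ui := by
    rw [span_le]
    rintro _ ⟨j, rfl⟩
    refine Submodule.mem_inf.2 ⟨hxU j.val, ?_⟩
    have hWle : span ℂ ({b (j.val,0), b (j.val,1)} : Set V) ≤ Ui := by
      rw [hUidef]
      exact le_iSup₂ (f := fun k (_ : k ∈ ({i}ᶜ : Set (Fin n))) =>
        span ℂ ({b (k,0), b (k,1)} : Set V)) j.val j.2
    exact hWle (hxW j.val)
  have hcard : Fintype.card {j : Fin n // j ≠ i} = n - 1 := by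
    rw [Fintype.card_subtype_compl, Fintype.card_fin, Fintype.card_subtype_eq]
  have hlow : n - 1 ≤ finrank ℂ (U ⊓ Ui : Submodule ℂ V) := by
    have := Submodule.finrank_mono hsple
    rw [finrank_span_eq_card hli, hcard] at this
    exact this
  omega

theorem segre_iii_to_ii
    (hn : 1 ≤ n)
    (U : Submodule ℂ V) (hU : finrank ℂ U = n)
    (hiii : ∀ i, finrank ℂ
        (U ⊓ ⨆ j ∈ ({i}ᶜ : Set (Fin n)), span ℂ {b (j,0), b (j,1)} : Submodule ℂ V) = n - 1)
    (i : Fin n) : U ⊓ span ℂ {b (i,0), b (i,1)} ≠ ⊥ := by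
  classical
  set Us : Fin n → Submodule ℂ V :=
    fun j => ⨆ k ∈ ({j}ᶜ : Set (Fin n)), span ℂ {b (k,0), b (k,1)} with hUsdef
  have claim : ∀ s : Finset (Fin n),
      n ≤ finrank ℂ (U ⊓ ⨅ j ∈ s, Us j : Submodule ℂ V) + s.card := by
    intro s
    induction s using Finset.induction_on with
    | empty =>
      have he : (⨅ j ∈ (∅ : Finset (Fin n)), Us j) = ⊤ := by simp
      rw [he, inf_top_eq, hU]
      simp
    | insert _ _ hnotmem ih =>
      rename_i a s
      rw [Finset.iInf_insert, inf_inf_distrib_left, Finset.card_insert_of_notMem hnotmem]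
      have h1 : finrank ℂ (U ⊓ Us a : Submodule ℂ V) = n - 1 := hiii a
      have h2 := Submodule.finrank_sup_add_finrank_inf_eq (U ⊓ Us a)
        (U ⊓ ⨅ j ∈ s, Us j : Submodule ℂ V)
      have h3 : finrank ℂ ((U ⊓ Us a) ⊔ (U ⊓ ⨅ j ∈ s, Us j) : Submodule ℂ V) ≤ n := by
        have := Submodule.finrank_mono
          (sup_le inf_le_left inf_le_left :
            ((U ⊓ Us a) ⊔ (U ⊓ ⨅ j ∈ s, Us j) : Submodule ℂ V) ≤ U)
        rw [hU] at this
        exact this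
      omega
  have hkey := claim (Finset.univ.erase i)
  rw [Finset.card_erase_of_mem (Finset.mem_univ i), Finset.card_univ, Fintype.card_fin] at hkey
  have hle : (U ⊓ ⨅ j ∈ Finset.univ.erase i, Us j : Submodule ℂ V) ≤
      U ⊓ span ℂ ({b (i,0), b (i,1)} : Set V) := by
    refine inf_le_inf_left U ?_
    intro v hv
    rw [segre_mem_W]
    rintro ⟨p1, p2⟩ hp
    have hv1 : v ∈ Us p1 := by
      have := Submodule.mem_iInf _ |>.1 hv p1
      exact (Submodule.mem_iInf _ |>.1 this) (Finset.mem_erase.2 ⟨hp, Finset.mem_univ p1⟩)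
    exact (segre_mem_U b p1 v).1 hv1 p2
  have h1le : 1 ≤ finrank ℂ (U ⊓ span ℂ ({b (i,0), b (i,1)} : Set V) : Submodule ℂ V) := by
    have := Submodule.finrank_mono hle
    omega
  intro hbot
  rw [hbot] at h1le
  rw [finrank_bot] at h1le
  omega

end Aux5

/-- With `B = B₁ + ⋯ + Bₙ` and `B' = λ₁B₁ + ⋯ + λₙBₙ` for the standard alternating forms
`Bᵢ` attached to a basis `u₁, v₁, …, uₙ, vₙ` of `V = ℂ^{2n}`, where the `λᵢ` are pairwise
distinct and nonzero, for an `n`-dimensional subspace `U ⊆ V` the following are equivalent: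
(i) `U` is isotropic for both `B` and `B'`; (ii) `U ∩ Wᵢ ≠ 0` for every `i`, where
`Wᵢ = span(uᵢ, vᵢ)`; (iii) `dim (U ∩ Uᵢ) = n − 1` for every `i`, where `Uᵢ = ⊕_{j ≠ i} Wⱼ`.
(The common Lagrangian `n`-spaces of two general `2`-forms form a Segre `n`-fold
`P¹ × ⋯ × P¹` in `G(n, 2n)`.) -/
theorem common_lagrangians_form_segre
    (n : ℕ) (hn : 1 ≤ n)
    (V : Type*) [AddCommGroup V] [Module ℂ V] [FiniteDimensional ℂ V]
    (b : Basis (Fin n × Fin 2) ℂ V)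
    (B : Fin n → (V →ₗ[ℂ] V →ₗ[ℂ] ℂ))
    (hB : ∀ i, ∀ p q : Fin n × Fin 2,
      B i (b p) (b q) =
        if p = (i, 0) ∧ q = (i, 1) then 1
        else if p = (i, 1) ∧ q = (i, 0) then -1 else 0)
    (lam : Fin n → ℂ) (hlam : Function.Injective lam) (hlam0 : ∀ i, lam i ≠ 0)
    (U : Submodule ℂ V) (hU : Module.finrank ℂ U = n) :
    ((IsIsotropic (∑ i, B i) U ∧ IsIsotropic (∑ i, lam i • B i) U) ↔
      ∀ i, U ⊓ Submodule.span ℂ {b (i, 0), b (i, 1)} ≠ ⊥) ∧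
    ((∀ i, U ⊓ Submodule.span ℂ {b (i, 0), b (i, 1)} ≠ ⊥) ↔
      ∀ i, Module.finrank ℂ
          ↥(U ⊓ ⨆ j ∈ ({i}ᶜ : Set (Fin n)), Submodule.span ℂ {b (j, 0), b (j, 1)}) =
        n - 1) := by
  constructor
  · constructor
    · rintro ⟨h1, h2⟩ i
      exact segre_i_to_ii b hn hB lam hlam U hU h1 h2 i
    · intro hii
      exact segre_ii_to_i b hB lam U hU hii
  · constructor
    · intro hii i
      exact segre_ii_to_iii b hn U hU hii i
    · intro hiii i
      exact segre_iii_to_ii b hn U hU hiii i
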